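/- arXiv:1806.03032 — 5 statements merged into one kernel-verified Lean document; each statement's English description precedes it below -/
import Mathlib

section
/- Let p, q be points of the unit sphere S² ⊂ ℝ³ with p ≠ q and ⟪p,q⟫ ≥ 0 (i.e. the geodesic distance is at most π/2), and let r = ‖p − q‖. Then cot(d(p,q)) > 1/r − 1. -/
open Real RealInnerProductSpace

/-- For distinct points `p, q` on the unit sphere `S² ⊂ ℝ³` with `⟪p,q⟫ ≥ 0`
(geodesic distance at most `π/2`), and `r = ‖p - q‖` the chordal distance, the
cotangent of the geodesic distance `d(p,q) = arccos ⟪p,q⟫` satisfies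
`cot (d(p,q)) > 1/r - 1`. -/
theorem cot_geodesic_gt (p q : EuclideanSpace ℝ (Fin 3))
    (hp : ‖p‖ = 1) (hq : ‖q‖ = 1) (hpq : p ≠ q) (hinner : 0 ≤ ⟪p, q⟫) :
    Real.cot (Real.arccos ⟪p, q⟫) > 1 / ‖p - q‖ - 1 := by
  set t : ℝ := ⟪p, q⟫ with ht
  have ht1 : t < 1 := by
    rcases lt_or_eq_of_le (real_inner_le_norm p q) with h | h
    · simpa [hp, hq] using h
    · rw [hp, hq, one_mul] at h
      exact absurd ((inner_eq_one_iff_of_norm_eq_one hp hq).mp h) hpq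
  have hr : 0 < ‖p - q‖ := by
    simpa [sub_eq_zero] using hpq
  have hr2 : ‖p - q‖ ^ 2 = 2 - 2 * t := by
    rw [← real_inner_self_eq_norm_sq]
    simp only [inner_sub_sub_self]
    rw [real_inner_self_eq_norm_sq, real_inner_self_eq_norm_sq, hp, hq]
    rw [ht, real_inner_comm p q]
    ring
  have hspos : 0 < Real.sqrt (1 - t ^ 2) := Real.sqrt_pos.mpr (by nlinarith)
  have hs : Real.sqrt (1 - t ^ 2) ≤ ‖p - q‖ := by
    rw [show ‖p - q‖ = Real.sqrt (‖p - q‖ ^ 2) from (Real.sqrt_sq hr.le).symm]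
    exact Real.sqrt_le_sqrt (by nlinarith)
  rw [Real.cot_eq_cos_div_sin, Real.cos_arccos (by linarith) (by linarith),
    Real.sin_arccos]
  have h1 : t / ‖p - q‖ ≤ t / Real.sqrt (1 - t ^ 2) := by
    gcongr
  have hrlt : ‖p - q‖ < 2 := by nlinarith
  have h2 : (1 - ‖p - q‖) / ‖p - q‖ < t / ‖p - q‖ := by
    exact (div_lt_div_iff_of_pos_right hr).mpr (by nlinarith)
  have h3 : 1 / ‖p - q‖ - 1 = (1 - ‖p - q‖) / ‖p - q‖ := by
    field_simp
  rw [gt_iff_lt, h3]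
  exact h2.trans_le h1
end

section
/- Let p, q be points of the unit sphere S² ⊂ ℝ³ with p ≠ q and p ≠ −q, and let r = ‖p − q‖. Then cot(d(p,q)) < 1/r. -/
open Real RealInnerProductSpace

/-- For distinct, non-antipodal points `p, q` on the unit sphere `S² ⊂ ℝ³`, with
`r = ‖p - q‖` the chordal distance, the cotangent of the geodesic distance
`d(p,q) = arccos ⟪p,q⟫` satisfies `cot (d(p,q)) < 1/r`. -/
theorem cot_geodesic_lt (p q : EuclideanSpace ℝ (Fin 3))
    (hp : ‖p‖ = 1) (hq : ‖q‖ = 1) (hpq : p ≠ q) (hpq' : p ≠ -q) :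
    Real.cot (Real.arccos ⟪p, q⟫) < 1 / ‖p - q‖ := by
  set t : ℝ := ⟪p, q⟫ with ht
  have ht1 : t < 1 := (inner_lt_one_iff_real_of_norm_eq_one hp hq).2 hpq
  have ht2 : -1 < t := by
    have h := (inner_lt_one_iff_real_of_norm_eq_one hp (by simpa using hq : ‖-q‖ = 1)).2 hpq'
    rw [inner_neg_right] at h
    linarith
  have hr2 : ‖p - q‖ ^ 2 = 2 - 2 * t := by
    rw [← real_inner_self_eq_norm_sq, inner_sub_sub_self]
    have h1 : ⟪p, p⟫ = 1 := by rw [real_inner_self_eq_norm_sq, hp]; norm_num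
    have h2 : ⟪q, q⟫ = 1 := by rw [real_inner_self_eq_norm_sq, hq]; norm_num
    have h3 : ⟪q, p⟫ = ⟪p, q⟫ := real_inner_comm p q
    rw [h1, h2, h3, ← ht]; ring
  have hrpos : 0 < ‖p - q‖ := by
    rw [norm_pos_iff, sub_ne_zero]; exact hpq
  have hs : Real.sqrt (1 - t ^ 2) > 0 := Real.sqrt_pos.2 (by nlinarith)
  have hcot : Real.cot (Real.arccos t) = t / Real.sqrt (1 - t ^ 2) := by
    rw [Real.cot_eq_cos_div_sin, Real.cos_arccos ht2.le ht1.le, Real.sin_arccos]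
  rw [hcot, div_lt_div_iff₀ hs hrpos, one_mul]
  rcases le_or_gt t 0 with h0 | h0
  · calc t * ‖p - q‖ ≤ 0 := mul_nonpos_of_nonpos_of_nonneg h0 hrpos.le
      _ < _ := hs
  · have : (t * ‖p - q‖) ^ 2 < 1 - t ^ 2 := by
      rw [mul_pow, hr2]
      nlinarith [mul_nonneg (sq_nonneg (t - 1)) (by linarith : (0:ℝ) ≤ 2 * t + 1)]
    nlinarith [mul_pos h0 hrpos, Real.sq_sqrt (by nlinarith : (0:ℝ) ≤ 1 - t ^ 2), hs]
end

section
/- For every real number t and every k ∈ {1, 2}: if sin(2πt) = sin(2π(t + k/3)), then sin(4πt) ≠ sin(4π(t + k/3)). -/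
open Real

/-- For every real `t` and `k ∈ {1, 2}`: if `sin (2πt) = sin (2π(t + k/3))`,
then `sin (4πt) ≠ sin (4π(t + k/3))`. -/
theorem sin_shift_incompatibility (t : ℝ) (k : ℕ) (hk : k = 1 ∨ k = 2)
    (h : Real.sin (2 * π * t) = Real.sin (2 * π * (t + k / 3))) :
    Real.sin (4 * π * t) ≠ Real.sin (4 * π * (t + k / 3)) := by
  intro h2
  set a := 2 * π * t with ha
  set b := 2 * π * (t + k / 3) with hb
  have hd : b - a = 2 * π * (k / 3) := by rw [ha, hb]; ring
  have h4a : 4 * π * t = 2 * a := by rw [ha]; ring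
  have h4b : 4 * π * (t + k / 3) = 2 * b := by rw [hb]; ring
  rw [h4a, h4b, Real.sin_two_mul, Real.sin_two_mul, h] at h2
  have hprod : Real.sin b * (Real.cos a - Real.cos b) = 0 := by linarith
  have hπ : (π : ℝ) ≠ 0 := Real.pi_ne_zero
  rcases mul_eq_zero.1 hprod with hs | hc
  · -- sin b = 0 and sin a = 0
    have hsa : Real.sin a = 0 := by rw [h, hs]
    obtain ⟨m, hm⟩ := Real.sin_eq_zero_iff.1 hsa
    obtain ⟨n, hn⟩ := Real.sin_eq_zero_iff.1 hs
    have heq : ((n - m : ℤ) : ℝ) * π = 2 * π * (k / 3) := by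
      push_cast
      rw [← hd, ← hm, ← hn]; ring
    have key : ((3 * (n - m) : ℤ) : ℝ) * π = ((2 * k : ℕ) : ℝ) * π := by
      push_cast at heq ⊢
      linarith
    have h3' : (3 * (n - m) : ℤ) = ((2 * k : ℕ) : ℤ) := by
      exact_mod_cast mul_right_cancel₀ hπ key
    rcases hk with rfl | rfl <;> omega
  · -- cos a = cos b
    have hc' : Real.cos a = Real.cos b := by linarith
    have hcos1 : Real.cos (b - a) = 1 := by
      rw [Real.cos_sub, hc', ← h]
      rw [← Real.sin_sq_add_cos_sq a, hc', h]; ring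
    obtain ⟨n, hn⟩ := (Real.cos_eq_one_iff _).1 hcos1
    rw [hd] at hn
    have key : ((3 * n : ℤ) : ℝ) * (2 * π) = ((2 * k : ℕ) : ℝ) * π := by
      push_cast at hn ⊢
      linarith
    have h3' : (6 * n : ℤ) = ((2 * k : ℕ) : ℤ) := by
      have : ((6 * n : ℤ) : ℝ) * π = ((2 * k : ℕ) : ℝ) * π := by push_cast at key ⊢; linarith
      exact_mod_cast mul_right_cancel₀ hπ this
    rcases hk with rfl | rfl <;> omega
end

section
/- Define x(t) = 0.15·sin(4πt), y(t) = 0.2275·sin(2πt), z(t) = √(1 − x(t)² − y(t)²), and q(t) = (x(t), y(t), z(t)) ∈ ℝ³. Set q₁(t) = q(t), q₂(t) = q(t + 1/3), q₃(t) = q(t + 2/3). Then for every real t and all i ≠ j in {1,2,3}, q_i(t) ≠ q_j(t); that is, the test loop is collision-free. -/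
open Real

/-- First coordinate of the test loop: `x(t) = 0.15 sin (4πt)`. -/
noncomputable def xFun (t : ℝ) : ℝ := 0.15 * Real.sin (4 * π * t)

/-- Second coordinate of the test loop: `y(t) = 0.2275 sin (2πt)`. -/
noncomputable def yFun (t : ℝ) : ℝ := 0.2275 * Real.sin (2 * π * t)

/-- Third coordinate of the test loop: `z(t) = √(1 - x(t)² - y(t)²)`. -/
noncomputable def zFun (t : ℝ) : ℝ := Real.sqrt (1 - xFun t ^ 2 - yFun t ^ 2)

/-- The test loop `q(t) = (x(t), y(t), z(t)) ∈ ℝ³`. -/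
noncomputable def qFun (t : ℝ) : EuclideanSpace ℝ (Fin 3) :=
  (WithLp.equiv 2 (Fin 3 → ℝ)).symm ![xFun t, yFun t, zFun t]

/-- The `i`-th body of the choreography: `qᵢ(t) = q(t + (i-1)/3)` for `i = 1, 2, 3`. -/
noncomputable def qBody (i : Fin 3) (t : ℝ) : EuclideanSpace ℝ (Fin 3) :=
  qFun (t + (i : ℝ) / 3)

lemma key_trig (a b : ℝ) (hb : Real.sin b ≠ 0) (hb2 : Real.sin (2*b) ≠ 0)
    (h1 : Real.sin a = Real.sin (a + 2*b))
    (h2 : Real.sin (2*a) = Real.sin (2*a + 4*b)) : False := by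
  have e1 := Real.sin_sub_sin (a + 2*b) a
  rw [show ((a+2*b) - a)/2 = b by ring, show ((a+2*b) + a)/2 = a + b by ring] at e1
  have hc : Real.cos (a + b) = 0 := by
    have h0 : 2 * Real.sin b * Real.cos (a + b) = 0 := by linarith
    rcases mul_eq_zero.mp h0 with h | h
    · rcases mul_eq_zero.mp h with h' | h'
      · norm_num at h'
      · exact absurd h' hb
    · exact h
  have e2 := Real.sin_sub_sin (2*a + 4*b) (2*a)
  rw [show ((2*a+4*b) - 2*a)/2 = 2*b by ring,
      show ((2*a+4*b) + 2*a)/2 = 2*(a + b) by ring] at e2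
  have hc2 : Real.cos (2*(a + b)) = 0 := by
    have h0 : 2 * Real.sin (2*b) * Real.cos (2*(a + b)) = 0 := by linarith
    rcases mul_eq_zero.mp h0 with h | h
    · rcases mul_eq_zero.mp h with h' | h'
      · norm_num at h'
      · exact absurd h' hb2
    · exact h
  rw [Real.cos_two_mul, hc] at hc2
  norm_num at hc2

lemma coords_eq {s s' : ℝ} (h : qFun s = qFun s') :
    xFun s = xFun s' ∧ yFun s = yFun s' := by
  have h' : (![xFun s, yFun s, zFun s] : Fin 3 → ℝ)
      = ![xFun s', yFun s', zFun s'] :=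
    (WithLp.equiv 2 (Fin 3 → ℝ)).symm.injective h
  exact ⟨congrFun h' 0, congrFun h' 1⟩

lemma qFun_ne (s : ℝ) (k : ℝ) (hb : Real.sin (π * k / 3) ≠ 0)
    (hb2 : Real.sin (2 * (π * k / 3)) ≠ 0) : qFun s ≠ qFun (s + k / 3) := by
  intro h
  obtain ⟨hx, hy⟩ := coords_eq h
  have hY : Real.sin (2 * π * s) = Real.sin (2 * π * s + 2 * (π * k / 3)) := by
    have : (0.2275 : ℝ) ≠ 0 := by norm_num
    have := mul_left_cancel₀ this (by simpa [yFun] using hy)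
    rw [show 2 * π * (s + k/3) = 2 * π * s + 2 * (π * k / 3) by ring] at this
    exact this
  have hX : Real.sin (2 * (2 * π * s)) = Real.sin (2 * (2 * π * s) + 4 * (π * k / 3)) := by
    have h15 : (0.15 : ℝ) ≠ 0 := by norm_num
    have := mul_left_cancel₀ h15 (by simpa [xFun] using hx)
    rw [show 4 * π * (s + k/3) = 2 * (2 * π * s) + 4 * (π * k / 3) by ring,
        show 4 * π * s = 2 * (2 * π * s) by ring] at this
    exact this
  exact key_trig (2 * π * s) (π * k / 3) hb hb2 hY hX

lemma sin_pi_div_three_ne : Real.sin (π / 3) ≠ 0 := by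
  rw [Real.sin_pi_div_three]
  positivity

lemma sin_two_pi_div_three : Real.sin (2 * π / 3) = Real.sin (π / 3) := by
  rw [show 2 * π / 3 = π - π / 3 by ring, Real.sin_pi_sub]

lemma qFun_ne_one (s : ℝ) : qFun s ≠ qFun (s + 1 / 3) := by
  apply qFun_ne s 1
  · simpa using sin_pi_div_three_ne
  · rw [show 2 * (π * 1 / 3) = 2 * π / 3 by ring, sin_two_pi_div_three]
    exact sin_pi_div_three_ne

lemma qFun_ne_two (s : ℝ) : qFun s ≠ qFun (s + 2 / 3) := by
  apply qFun_ne s 2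
  · rw [show π * 2 / 3 = 2 * π / 3 by ring, sin_two_pi_div_three]
    exact sin_pi_div_three_ne
  · have h : Real.sin (π + π / 3) = -Real.sin (π / 3) := by
      rw [Real.sin_add]; simp
    rw [show 2 * (π * 2 / 3) = π + π / 3 by ring, h]
    simpa using sin_pi_div_three_ne

lemma qFun_ne_12 (t : ℝ) : qFun (t + 1 / 3) ≠ qFun (t + 2 / 3) := by
  rw [show t + 2/3 = t + 1/3 + 1/3 by ring]
  exact qFun_ne_one (t + 1/3)

/-- The test loop is collision-free: for every real `t` and all `i ≠ j` in
`{1,2,3}`, `qᵢ(t) ≠ qⱼ(t)`. -/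
theorem test_loop_collision_free (t : ℝ) (i j : Fin 3) (hij : i ≠ j) :
    qBody i t ≠ qBody j t := by
  fin_cases i <;> fin_cases j
  · exact absurd rfl hij
  · simpa [qBody] using qFun_ne_one t
  · simpa [qBody] using qFun_ne_two t
  · simpa [qBody] using (qFun_ne_one t).symm
  · exact absurd rfl hij
  · simpa [qBody] using qFun_ne_12 t
  · simpa [qBody] using (qFun_ne_two t).symm
  · simpa [qBody] using (qFun_ne_12 t).symm
  · exact absurd rfl hij
end

section
/- Let q₁, q₂, q₃ ∈ S² ⊂ ℝ³ be pairwise distinct points with ⟪q_i, q_j⟫ ≥ 0 for all i ≠ j, and let v₁, v₂, v₃ ∈ ℝ³ be arbitrary. Then (1/2)·∑_{i=1}^{3} ‖v_i‖² + ∑_{1 ≤ i < j ≤ 3} cot(d(q_i,q_j)) ≥ (1/3)·∑_{1 ≤ i < j ≤ 3} [ (1/2)·‖v_i − v_j‖² + 3/‖q_i − q_j‖ ] − 3. -/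
open Real RealInnerProductSpace

theorem cot_aux (t : ℝ) (h0 : 0 ≤ t) (h1 : t < 1) :
    1 / Real.sqrt (2 - 2*t) - 1 ≤ t / Real.sqrt (1 - t^2) := by
  have hs : Real.sqrt (1 - t) ^ 2 = 1 - t := Real.sq_sqrt (by linarith)
  have hu : Real.sqrt (1 + t) ^ 2 = 1 + t := Real.sq_sqrt (by linarith)
  have hsp : 0 < Real.sqrt (1 - t) := Real.sqrt_pos.2 (by linarith)
  have hup : 0 < Real.sqrt (1 + t) := Real.sqrt_pos.2 (by linarith)
  have h2 : Real.sqrt 2 ^ 2 = 2 := Real.sq_sqrt (by norm_num)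
  have h2p : (0:ℝ) < Real.sqrt 2 := Real.sqrt_pos.2 (by norm_num)
  have h21 : (1:ℝ) ≤ Real.sqrt 2 := by nlinarith
  have hule : Real.sqrt (1 + t) ≤ Real.sqrt 2 := Real.sqrt_le_sqrt (by linarith)
  have hsle : Real.sqrt (1 - t) ≤ 1 := by nlinarith
  have hsb : 1 - t ≤ Real.sqrt (1 - t) := by nlinarith
  have e1 : Real.sqrt (1 - t^2) = Real.sqrt (1 - t) * Real.sqrt (1 + t) := by
    rw [← Real.sqrt_mul (by linarith)]; ring_nf
  have e2 : Real.sqrt (2 - 2*t) = Real.sqrt 2 * Real.sqrt (1 - t) := by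
    rw [← Real.sqrt_mul (by norm_num)]; ring_nf
  rw [e1, e2, sub_le_iff_le_add, div_le_iff₀ (by positivity)]
  have key : Real.sqrt (1 + t) ≤ Real.sqrt 2 * t + Real.sqrt 2 * (Real.sqrt (1 - t) * Real.sqrt (1 + t)) := by
    nlinarith [mul_nonneg h0 (sub_nonneg.2 hule),
      mul_nonneg (mul_nonneg h2p.le hup.le) (sub_nonneg.2 hsb),
      mul_nonneg (mul_nonneg (by linarith : (0:ℝ) ≤ 1 - t) (by linarith : (0:ℝ) ≤ Real.sqrt 2 - 1)) hup.le]
  have expand : (t / (Real.sqrt (1 - t) * Real.sqrt (1 + t)) + 1) * (Real.sqrt 2 * Real.sqrt (1 - t))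
      = (Real.sqrt 2 * t + Real.sqrt 2 * (Real.sqrt (1 - t) * Real.sqrt (1 + t))) / Real.sqrt (1 + t) := by
    field_simp
  rw [expand, le_div_iff₀ hup]
  linarith

theorem pair_aux (p q : EuclideanSpace ℝ (Fin 3)) (hp : ‖p‖ = 1) (hq : ‖q‖ = 1)
    (hne : p ≠ q) (hi : 0 ≤ ⟪p, q⟫) :
    1 / ‖p - q‖ - 1 ≤ Real.cot (Real.arccos ⟪p, q⟫) := by
  set t := ⟪p, q⟫ with ht
  have hnorm : ‖p - q‖ ^ 2 = 2 - 2 * t := by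
    rw [norm_sub_sq_real, hp, hq]; ring
  have hpos : 0 < ‖p - q‖ := by
    rw [norm_pos_iff]; exact sub_ne_zero.2 hne
  have h1 : t < 1 := by nlinarith
  have e : ‖p - q‖ = Real.sqrt (2 - 2 * t) := by
    rw [← hnorm, Real.sqrt_sq hpos.le]
  rw [Real.cot_eq_cos_div_sin, Real.cos_arccos (by linarith) (by linarith),
    Real.sin_arccos, e]
  exact cot_aux t hi h1

theorem kin_aux (v₁ v₂ v₃ : EuclideanSpace ℝ (Fin 3)) :
    (1 / 3 : ℝ) * ((1/2:ℝ) * ‖v₁ - v₂‖^2 + (1/2:ℝ) * ‖v₁ - v₃‖^2 + (1/2:ℝ) * ‖v₂ - v₃‖^2)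
      ≤ (1/2:ℝ) * (‖v₁‖^2 + ‖v₂‖^2 + ‖v₃‖^2) := by
  have e12 : ‖v₁ - v₂‖^2 = ‖v₁‖^2 - 2*⟪v₁,v₂⟫ + ‖v₂‖^2 := norm_sub_sq_real v₁ v₂
  have e13 : ‖v₁ - v₃‖^2 = ‖v₁‖^2 - 2*⟪v₁,v₃⟫ + ‖v₃‖^2 := norm_sub_sq_real v₁ v₃
  have e23 : ‖v₂ - v₃‖^2 = ‖v₂‖^2 - 2*⟪v₂,v₃⟫ + ‖v₃‖^2 := norm_sub_sq_real v₂ v₃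
  have hsum : (0:ℝ) ≤ ‖v₁ + v₂ + v₃‖^2 := sq_nonneg _
  have esum : ‖v₁ + v₂ + v₃‖^2
      = ‖v₁‖^2 + ‖v₂‖^2 + ‖v₃‖^2 + 2*⟪v₁,v₂⟫ + 2*⟪v₁,v₃⟫ + 2*⟪v₂,v₃⟫ := by
    rw [norm_add_sq_real, norm_add_sq_real, inner_add_left]; ring
  linarith [esum ▸ hsum]

/-- Pointwise estimate underlying the action lower bound for binary-collision
solutions of the three-body problem on `S²` with unit masses: for pairwise
distinct `q₁, q₂, q₃ ∈ S²` with `⟪qᵢ, qⱼ⟫ ≥ 0` for `i ≠ j` and arbitrary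
`v₁, v₂, v₃ ∈ ℝ³`,
`(1/2) ∑ ‖vᵢ‖² + ∑_{i<j} cot (d(qᵢ,qⱼ))
  ≥ (1/3) ∑_{i<j} [(1/2) ‖vᵢ - vⱼ‖² + 3/‖qᵢ - qⱼ‖] - 3`. -/
theorem pointwise_action_estimate (q₁ q₂ q₃ v₁ v₂ v₃ : EuclideanSpace ℝ (Fin 3))
    (hq₁ : ‖q₁‖ = 1) (hq₂ : ‖q₂‖ = 1) (hq₃ : ‖q₃‖ = 1)
    (h12 : q₁ ≠ q₂) (h13 : q₁ ≠ q₃) (h23 : q₂ ≠ q₃)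
    (hi12 : 0 ≤ ⟪q₁, q₂⟫) (hi13 : 0 ≤ ⟪q₁, q₃⟫) (hi23 : 0 ≤ ⟪q₂, q₃⟫) :
    (1 / 2 : ℝ) * (‖v₁‖ ^ 2 + ‖v₂‖ ^ 2 + ‖v₃‖ ^ 2) +
        (Real.cot (Real.arccos ⟪q₁, q₂⟫) + Real.cot (Real.arccos ⟪q₁, q₃⟫) +
          Real.cot (Real.arccos ⟪q₂, q₃⟫)) ≥
      (1 / 3 : ℝ) *
          (((1 / 2 : ℝ) * ‖v₁ - v₂‖ ^ 2 + 3 / ‖q₁ - q₂‖) +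
            ((1 / 2 : ℝ) * ‖v₁ - v₃‖ ^ 2 + 3 / ‖q₁ - q₃‖) +
            ((1 / 2 : ℝ) * ‖v₂ - v₃‖ ^ 2 + 3 / ‖q₂ - q₃‖)) - 3 := by
  have c12 := pair_aux q₁ q₂ hq₁ hq₂ h12 hi12
  have c13 := pair_aux q₁ q₃ hq₁ hq₃ h13 hi13
  have c23 := pair_aux q₂ q₃ hq₂ hq₃ h23 hi23
  have k := kin_aux v₁ v₂ v₃
  have r12 : (1/3:ℝ) * (3 / ‖q₁ - q₂‖) = 1 / ‖q₁ - q₂‖ := by ring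
  have r13 : (1/3:ℝ) * (3 / ‖q₁ - q₃‖) = 1 / ‖q₁ - q₃‖ := by ring
  have r23 : (1/3:ℝ) * (3 / ‖q₂ - q₃‖) = 1 / ‖q₂ - q₃‖ := by ring
  nlinarith [c12, c13, c23, k]
end
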